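/- Let p be a prime, let α, β ∈ ℚ_p with ‖α‖_p = 1 and ‖β‖_p ≤ 1, set Δ = [[0, α], [1, β]], and assume: (a) the polynomial X² − βX − α has no root in ℚ_p; (b) for all b, d ∈ ℚ_p with ‖b‖_p = ‖d‖_p = 1 one has ‖αd² − b² − βbd‖_p ≥ p^{−1}. Let T_Δ be the centralizer of Δ in GL₂(ℚ_p), and for j ∈ ℕ let d_j = [[1, 0], [0, p^j]]. Then every g ∈ GL₂(ℚ_p) lies in the double coset T_Δ·d_j·K_p for exactly one j ∈ ℕ; that is, the double cosets T_Δ d_j K_p, j ≥ 0, are pairwise disjoint and their union is GL₂(ℚ_p). -/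

import Mathlib

set_option maxHeartbeats 1000000

/-- The matrix `d_j = [[1, 0], [0, p^j]]` over `ℚ_p`. -/
noncomputable def dMat (p : ℕ) [Fact (Nat.Prime p)] (j : ℕ) : Matrix (Fin 2) (Fin 2) ℚ_[p] :=
  !![1, 0; 0, (p : ℚ_[p]) ^ j]

/-- The maximal compact subgroup `K_p = GL₂(ℤ_p)`, viewed as the set of invertible matrices
`k` over `ℚ_p` such that all entries of `k` and of `k⁻¹` have norm at most `1`. -/
def Kp (p : ℕ) [Fact (Nat.Prime p)] : Set (Matrix (Fin 2) (Fin 2) ℚ_[p]) :=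
  {k | IsUnit k ∧ ∀ i j, ‖k i j‖ ≤ 1 ∧ ‖k⁻¹ i j‖ ≤ 1}

namespace Stmt13Aux

variable {p : ℕ} [Fact (Nat.Prime p)]

lemma nadd {x y : ℚ_[p]} (hx : ‖x‖ ≤ 1) (hy : ‖y‖ ≤ 1) : ‖x + y‖ ≤ 1 :=
  le_trans (Padic.nonarchimedean x y) (max_le hx hy)

lemma nmul {x y : ℚ_[p]} (hx : ‖x‖ ≤ 1) (hy : ‖y‖ ≤ 1) : ‖x * y‖ ≤ 1 := by
  rw [norm_mul]
  exact mul_le_one₀ hx (norm_nonneg y) hy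

lemma nsub {x y : ℚ_[p]} (hx : ‖x‖ ≤ 1) (hy : ‖y‖ ≤ 1) : ‖x - y‖ ≤ 1 := by
  rw [sub_eq_add_neg]; exact nadd hx (by rwa [norm_neg])

lemma ndom {x y : ℚ_[p]} (h : ‖y‖ < ‖x‖) : ‖x + y‖ = ‖x‖ := by
  rw [Padic.add_eq_max_of_ne (ne_of_gt h)]
  exact max_eq_left h.le

lemma mem_Kp_of {k kinv : Matrix (Fin 2) (Fin 2) ℚ_[p]} (h1 : k * kinv = 1) (_h2 : kinv * k = 1)
    (hk : ∀ i j, ‖k i j‖ ≤ 1) (hkinv : ∀ i j, ‖kinv i j‖ ≤ 1) : k ∈ Kp p := by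
  have hdet : IsUnit k.det := by
    refine IsUnit.of_mul_eq_one kinv.det ?_
    rw [← Matrix.det_mul, h1, Matrix.det_one]
  refine ⟨(Matrix.isUnit_iff_isUnit_det k).2 hdet, fun i j => ⟨hk i j, ?_⟩⟩
  rw [Matrix.inv_eq_right_inv h1]; exact hkinv i j

lemma Kp_det_norm_one {k : Matrix (Fin 2) (Fin 2) ℚ_[p]} (hk : k ∈ Kp p) : ‖k.det‖ = 1 := by
  obtain ⟨hu, hb⟩ := hk
  have hd : IsUnit k.det := (Matrix.isUnit_iff_isUnit_det k).1 hu
  have h1 : ‖k.det‖ ≤ 1 := by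
    rw [Matrix.det_fin_two]
    exact nsub (nmul (hb 0 0).1 (hb 1 1).1) (nmul (hb 0 1).1 (hb 1 0).1)
  have h2 : ‖(k⁻¹).det‖ ≤ 1 := by
    rw [Matrix.det_fin_two]
    exact nsub (nmul (hb 0 0).2 (hb 1 1).2) (nmul (hb 0 1).2 (hb 1 0).2)
  have h3 : k.det * (k⁻¹).det = 1 := by
    rw [← Matrix.det_mul, Matrix.mul_nonsing_inv _ hd, Matrix.det_one]
  have h4 : ‖k.det‖ * ‖(k⁻¹).det‖ = 1 := by rw [← norm_mul, h3, norm_one]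
  nlinarith [norm_nonneg k.det, norm_nonneg (k⁻¹).det]

lemma Kp_mul {k k' : Matrix (Fin 2) (Fin 2) ℚ_[p]} (hk : k ∈ Kp p) (hk' : k' ∈ Kp p) :
    k * k' ∈ Kp p := by
  obtain ⟨hu, hb⟩ := hk; obtain ⟨hu', hb'⟩ := hk'
  refine ⟨hu.mul hu', fun i j => ⟨?_, ?_⟩⟩
  · rw [Matrix.mul_apply, Fin.sum_univ_two]
    exact nadd (nmul (hb i 0).1 (hb' 0 j).1) (nmul (hb i 1).1 (hb' 1 j).1)
  · rw [Matrix.mul_inv_rev, Matrix.mul_apply, Fin.sum_univ_two]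
    exact nadd (nmul (hb' i 0).2 (hb 0 j).2) (nmul (hb' i 1).2 (hb 1 j).2)

lemma Kp_inv {k : Matrix (Fin 2) (Fin 2) ℚ_[p]} (hk : k ∈ Kp p) : k⁻¹ ∈ Kp p := by
  obtain ⟨hu, hb⟩ := hk
  have hd : IsUnit k.det := (Matrix.isUnit_iff_isUnit_det k).1 hu
  have hdet : IsUnit (k⁻¹).det := by
    refine IsUnit.of_mul_eq_one k.det ?_
    rw [← Matrix.det_mul, Matrix.nonsing_inv_mul _ hd, Matrix.det_one]
  refine ⟨(Matrix.isUnit_iff_isUnit_det _).2 hdet, fun i j => ⟨(hb i j).2, ?_⟩⟩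
  rw [Matrix.nonsing_inv_nonsing_inv _ hd]; exact (hb i j).1


lemma pR1 : (1:ℝ) < (p:ℝ) := by exact_mod_cast (Fact.out : p.Prime).one_lt

lemma exists_pow_unit {x : ℚ_[p]} (hx : x ≠ 0) (h1 : ‖x‖ ≤ 1) :
    ∃ (j : ℕ) (u : ℚ_[p]), ‖u‖ = 1 ∧ x = (p : ℚ_[p]) ^ j * u := by
  have hv : 0 ≤ x.valuation := (Padic.norm_le_one_iff_val_nonneg x).1 h1
  have hpne : ((p:ℚ_[p])) ^ x.valuation.toNat ≠ 0 :=
    pow_ne_zero _ (Nat.cast_ne_zero.2 (Fact.out : p.Prime).ne_zero)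
  refine ⟨x.valuation.toNat, x / (p:ℚ_[p]) ^ x.valuation.toNat, ?_, by field_simp⟩
  rw [norm_div, Padic.norm_eq_zpow_neg_valuation hx, Padic.norm_p_pow, Int.toNat_of_nonneg hv,
    div_self]
  apply zpow_ne_zero
  linarith [@pR1 p _]

lemma le_norm_of_one_lt {x : ℚ_[p]} (h : 1 < ‖x‖) : (p:ℝ) ≤ ‖x‖ := by
  have hx : x ≠ 0 := by rintro rfl; simp at h; linarith
  rw [Padic.norm_eq_zpow_neg_valuation hx] at h ⊢
  have hp1 : (1:ℝ) < (p:ℝ) := pR1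
  have h1 : (0:ℤ) < -x.valuation := by
    by_contra hc
    push_neg at hc
    have := zpow_le_one_of_nonpos₀ (le_of_lt hp1) hc
    linarith
  calc (p:ℝ) = (p:ℝ)^(1:ℤ) := (zpow_one _).symm
    _ ≤ (p:ℝ)^(-x.valuation) := zpow_le_zpow_right₀ (le_of_lt hp1) h1

lemma primP (α β : ℚ_[p]) (hα : ‖α‖ = 1) (hβ : ‖β‖ ≤ 1)
    (hbd : ∀ b d : ℚ_[p], ‖b‖ = 1 → ‖d‖ = 1 →
      (p : ℝ)⁻¹ ≤ ‖α * d^2 - b^2 - β * b * d‖)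
    {b d : ℚ_[p]} (hb : ‖b‖ ≤ 1) (hd : ‖d‖ ≤ 1) (h : ‖b‖ = 1 ∨ ‖d‖ = 1) :
    (p:ℝ)⁻¹ ≤ ‖b^2 + β*b*d - α*d^2‖ := by
  have hpinv : (p:ℝ)⁻¹ ≤ 1 := by
    apply inv_le_one_of_one_le₀
    exact_mod_cast (Fact.out : p.Prime).one_le
  by_cases hb1 : ‖b‖ = 1 <;> by_cases hd1 : ‖d‖ = 1
  · have := hbd b d hb1 hd1
    have he : b^2 + β*b*d - α*d^2 = -(α * d^2 - b^2 - β * b * d) := by ring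
    rwa [he, norm_neg]
  · -- ‖b‖ = 1, ‖d‖ < 1
    have hdlt : ‖d‖ < 1 := lt_of_le_of_ne hd hd1
    have he : b^2 + β*b*d - α*d^2 = b^2 + (β*b*d - α*d^2) := by ring
    rw [he, ndom, norm_pow, hb1, one_pow]; exact hpinv
    have h1 : ‖β*b*d - α*d^2‖ < 1 := by
      rw [sub_eq_add_neg]
      refine lt_of_le_of_lt (Padic.nonarchimedean _ _) (max_lt ?_ ?_)
      · calc ‖β*b*d‖ = ‖β‖*‖b‖*‖d‖ := by rw [norm_mul, norm_mul]
          _ ≤ 1*1*‖d‖ := by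
              rw [hb1]; nlinarith [mul_le_mul_of_nonneg_right hβ (norm_nonneg d)]
          _ < 1 := by simpa using hdlt
      · rw [norm_neg]
        calc ‖α*d^2‖ = ‖α‖*‖d‖^2 := by rw [norm_mul, norm_pow]
          _ < 1 := by rw [hα, one_mul]; nlinarith [norm_nonneg d]
    rwa [norm_pow, hb1, one_pow]
  · -- ‖d‖ = 1, ‖b‖ < 1
    have hblt : ‖b‖ < 1 := lt_of_le_of_ne hb hb1
    have he : b^2 + β*b*d - α*d^2 = (-(α*d^2)) + (b^2 + β*b*d) := by ring
    rw [he, ndom, norm_neg]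
    · rw [norm_mul, norm_pow, hα, hd1]; simpa using hpinv
    · rw [norm_neg, norm_mul, norm_pow, hα, hd1]
      simp only [one_mul, one_pow]
      refine lt_of_le_of_lt (Padic.nonarchimedean _ _) (max_lt ?_ ?_)
      · rw [norm_pow]; nlinarith [norm_nonneg b]
      · calc ‖β*b*d‖ = ‖β‖*‖b‖*‖d‖ := by rw [norm_mul, norm_mul]
          _ ≤ 1*‖b‖*1 := by
              rw [hd1]; nlinarith [mul_le_mul_of_nonneg_right hβ (norm_nonneg b)]
          _ < 1 := by simpa using hblt
  · tauto

lemma N0_ne (α β : ℚ_[p]) (hroot : ∀ x : ℚ_[p], x^2 - β * x - α ≠ 0)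
    {e f : ℚ_[p]} (hf : f ≠ 0) : e^2 + β*e*f - α*f^2 ≠ 0 := by
  intro h
  apply hroot (-(e/f))
  have : (-(e/f))^2 - β * (-(e/f)) - α = (e^2 + β*e*f - α*f^2)/f^2 := by
    field_simp; ring
  rw [this, h, zero_div]

lemma tri_exists (α β : ℚ_[p]) (hα : ‖α‖ = 1) (hβ : ‖β‖ ≤ 1)
    (hroot : ∀ x : ℚ_[p], x^2 - β * x - α ≠ 0)
    (hbd : ∀ b d : ℚ_[p], ‖b‖ = 1 → ‖d‖ = 1 →
      (p : ℝ)⁻¹ ≤ ‖α * d^2 - b^2 - β * b * d‖)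
    (a' c' d : ℚ_[p]) (ha' : a' ≠ 0) (hd : d ≠ 0) :
    ∃ (j : ℕ) (t k : Matrix (Fin 2) (Fin 2) ℚ_[p]),
      (IsUnit t ∧ t * !![0,α;1,β] = !![0,α;1,β] * t) ∧ k ∈ Kp p ∧
      !![a', c'; 0, d] = t * dMat p j * k := by
  have hp0 : (0:ℝ) < (p:ℝ) := lt_trans zero_lt_one pR1
  obtain ⟨e, he⟩ : ∃ y, y = c'/a' := ⟨_, rfl⟩
  obtain ⟨f, hf⟩ : ∃ y, y = d/a' := ⟨_, rfl⟩
  have hf0 : f ≠ 0 := by rw [hf]; exact div_ne_zero hd ha'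
  have hc' : c' = a'*e := by rw [he]; field_simp
  have hd' : d = a'*f := by rw [hf]; field_simp
  by_cases hcase : ‖e‖ ≤ 1 ∧ ‖f‖ ≤ 1
  · -- Case 1 : integral e, f
    obtain ⟨j, u, hu, hfu⟩ := exists_pow_unit hf0 hcase.2
    have hu0 : u ≠ 0 := by intro h; rw [h] at hu; simp at hu
    refine ⟨j, !![a',0;0,a'], !![1, e; 0, u], ⟨?_, ?_⟩, ?_, ?_⟩
    · rw [Matrix.isUnit_iff_isUnit_det, Matrix.det_fin_two_of, isUnit_iff_ne_zero]
      simpa using mul_ne_zero ha' ha'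
    · ext i l
      fin_cases i <;> fin_cases l <;> simp [Matrix.mul_apply, Fin.sum_univ_two] <;> ring
    · refine mem_Kp_of (kinv := !![1, -(e/u); 0, u⁻¹]) ?_ ?_ ?_ ?_
      · ext i l
        fin_cases i <;> fin_cases l <;>
          simp [Matrix.mul_apply, Fin.sum_univ_two, Matrix.one_apply] <;> field_simp <;> ring
      · ext i l
        fin_cases i <;> fin_cases l <;>
          simp [Matrix.mul_apply, Fin.sum_univ_two, Matrix.one_apply] <;> field_simp <;> ring
      · intro i l
        fin_cases i <;> fin_cases l <;> simp [hu, hcase.1]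
      · intro i l
        fin_cases i <;> fin_cases l <;>
          simp [hu, norm_div, norm_neg, norm_inv] <;> simp [hu, hcase.1]
    · rw [hc', hd', hfu]
      ext i l
      fin_cases i <;> fin_cases l <;>
        simp [dMat, Matrix.mul_apply, Fin.sum_univ_two] <;> ring
  · -- Case 2
    have hcase' : 1 < ‖e‖ ∨ 1 < ‖f‖ := by
      by_cases h1 : ‖e‖ ≤ 1
      · right; by_contra h2; push_neg at h2; exact hcase ⟨h1, h2⟩
      · left; linarith [not_le.1 h1]
    obtain ⟨s', hs'⟩ : ∃ y, y = if ‖f‖ ≤ ‖e‖ then e else f := ⟨_, rfl⟩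
    have hmax : ‖e‖ ≤ ‖s'‖ ∧ ‖f‖ ≤ ‖s'‖ := by
      rw [hs']; split_ifs with h
      · exact ⟨le_rfl, h⟩
      · exact ⟨le_of_not_ge h, le_rfl⟩
    have h1s : 1 < ‖s'‖ := by
      rcases hcase' with h | h
      · exact lt_of_lt_of_le h hmax.1
      · exact lt_of_lt_of_le h hmax.2
    have hs0 : s' ≠ 0 := by intro h; rw [h, norm_zero] at h1s; linarith
    have hsnorm : (0:ℝ) < ‖s'‖ := norm_pos_iff.2 hs0
    have honemax : ‖e/s'‖ = 1 ∨ ‖f/s'‖ = 1 := by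
      rw [hs']; split_ifs with h
      · left; rw [div_self]; · exact norm_one
        intro h0; rw [hs', if_pos h, h0] at hs0; exact hs0 rfl
      · right; rw [div_self hf0]; exact norm_one
    have hble : ‖e/s'‖ ≤ 1 := by
      rw [norm_div]; exact div_le_one_of_le₀ hmax.1 (norm_nonneg _)
    have hdle : ‖f/s'‖ ≤ 1 := by
      rw [norm_div]; exact div_le_one_of_le₀ hmax.2 (norm_nonneg _)
    have hP := primP α β hα hβ hbd hble hdle honemax
    have hN0 : e^2 + β*e*f - α*f^2 ≠ 0 := N0_ne α β hroot hf0
    have hNval : (e/s')^2 + β*(e/s')*(f/s') - α*(f/s')^2 = (e^2 + β*e*f - α*f^2)/s'^2 := by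
      field_simp
    rw [hNval, norm_div, norm_pow] at hP
    have hNnorm : (p:ℝ)⁻¹ * ‖s'‖^2 ≤ ‖e^2 + β*e*f - α*f^2‖ := by
      rw [le_div_iff₀ (by positivity)] at hP; linarith
    have hpr : (p:ℝ) ≤ ‖s'‖ := le_norm_of_one_lt h1s
    have hrN : ‖s'‖ ≤ ‖e^2 + β*e*f - α*f^2‖ := by
      have h1 : (p:ℝ)⁻¹ * ((p:ℝ) * ‖s'‖) ≤ (p:ℝ)⁻¹ * (‖s'‖ * ‖s'‖) := by
        apply mul_le_mul_of_nonneg_left _ (by positivity)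
        exact mul_le_mul_of_nonneg_right hpr (norm_nonneg _)
      have h2 : (p:ℝ)⁻¹ * ((p:ℝ) * ‖s'‖) = ‖s'‖ := by field_simp
      nlinarith [sq_nonneg ‖s'‖]
    obtain ⟨A, hA⟩ : ∃ y, y = (e + β*f)/(e^2 + β*e*f - α*f^2) := ⟨_, rfl⟩
    obtain ⟨C, hC⟩ : ∃ y, y = -(f/(e^2 + β*e*f - α*f^2)) := ⟨_, rfl⟩
    have hC0 : C ≠ 0 := by
      rw [hC, neg_ne_zero]; exact div_ne_zero hf0 hN0
    have hAle : ‖A‖ ≤ 1 := by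
      rw [hA, norm_div]
      apply div_le_one_of_le₀ _ (norm_nonneg _)
      have h1 : ‖e + β*f‖ ≤ max ‖e‖ ‖β*f‖ := Padic.nonarchimedean _ _
      have h2 : ‖β*f‖ ≤ ‖f‖ := by
        rw [norm_mul]
        nlinarith [norm_nonneg f, norm_nonneg β, mul_le_mul_of_nonneg_right hβ (norm_nonneg f)]
      calc ‖e + β*f‖ ≤ max ‖e‖ ‖β*f‖ := h1
        _ ≤ ‖s'‖ := max_le hmax.1 (le_trans h2 hmax.2)
        _ ≤ _ := hrN
    have hCle : ‖C‖ ≤ 1 := by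
      rw [hC, norm_neg, norm_div]
      exact div_le_one_of_le₀ (le_trans hmax.2 hrN) (norm_nonneg _)
    obtain ⟨j, u, hu, hCu⟩ := exists_pow_unit hC0 hCle
    have hu0 : u ≠ 0 := by intro h; rw [h] at hu; simp at hu
    refine ⟨j, !![a'*e, a'*f*α; a'*f, a'*e + β*(a'*f)], !![A, 1; u, 0], ⟨?_, ?_⟩, ?_, ?_⟩
    · rw [Matrix.isUnit_iff_isUnit_det, Matrix.det_fin_two_of, isUnit_iff_ne_zero]
      have hdet : a'*e*(a'*e + β*(a'*f)) - a'*f*α*(a'*f) = a'^2 * (e^2 + β*e*f - α*f^2) := by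
        ring
      rw [hdet]
      exact mul_ne_zero (pow_ne_zero _ ha') hN0
    · ext i l
      fin_cases i <;> fin_cases l <;> simp [Matrix.mul_apply, Fin.sum_univ_two] <;> ring
    · refine mem_Kp_of (kinv := !![0, u⁻¹; 1, -(A/u)]) ?_ ?_ ?_ ?_
      · ext i l
        fin_cases i <;> fin_cases l <;>
          simp [Matrix.mul_apply, Fin.sum_univ_two, Matrix.one_apply] <;> field_simp <;> ring
      · ext i l
        fin_cases i <;> fin_cases l <;>
          simp [Matrix.mul_apply, Fin.sum_univ_two, Matrix.one_apply] <;> field_simp <;> ring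
      · intro i l
        fin_cases i <;> fin_cases l <;> simp [hu, hAle]
      · intro i l
        fin_cases i <;> fin_cases l <;>
          simp [hu, norm_div, norm_neg, norm_inv] <;> simp [hu, hAle]
    · have hstep : dMat p j * !![A, 1; u, 0] = !![A, 1; C, 0] := by
        ext i l
        fin_cases i <;> fin_cases l <;>
          simp [dMat, Matrix.mul_apply, Fin.sum_univ_two, hCu]
      rw [mul_assoc, hstep, hc', hd']
      have : !![a'*e, a'*f*α; a'*f, a'*e + β*(a'*f)] * !![A, 1; C, 0]
          = !![a', a'*e; 0, a'*f] := by
        rw [hA, hC]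
        have hN0' : e * β * f + e ^ 2 - f ^ 2 * α ≠ 0 := by convert hN0 using 1; ring
        ext i l
        fin_cases i <;> fin_cases l <;> simp [Matrix.mul_apply, Fin.sum_univ_two] <;>
          field_simp <;> ring_nf <;> rw [← add_mul, ← sub_mul, mul_inv_cancel₀ hN0']
      rw [this]

lemma coset_le (α β : ℚ_[p]) (hα : ‖α‖ = 1) (hβ : ‖β‖ ≤ 1) {j j' : ℕ}
    {t t' k k' : Matrix (Fin 2) (Fin 2) ℚ_[p]}
    (ht : IsUnit t) (htc : t * !![0,α;1,β] = !![0,α;1,β] * t)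
    (ht' : IsUnit t') (htc' : t' * !![0,α;1,β] = !![0,α;1,β] * t')
    (hk : k ∈ Kp p) (hk' : k' ∈ Kp p)
    (heq : t * dMat p j * k = t' * dMat p j' * k') : j ≤ j' := by
  have hα0 : α ≠ 0 := by intro h; rw [h, norm_zero] at hα; norm_num at hα
  have hdt' : IsUnit t'.det := (Matrix.isUnit_iff_isUnit_det _).1 ht'
  have hdk : IsUnit k.det := (Matrix.isUnit_iff_isUnit_det _).1 hk.1
  set Δ : Matrix (Fin 2) (Fin 2) ℚ_[p] := !![0,α;1,β] with hΔ
  obtain ⟨s, hs⟩ : ∃ y, y = t'⁻¹ * t := ⟨_, rfl⟩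
  obtain ⟨κ, hκdef⟩ : ∃ y, y = k' * k⁻¹ := ⟨_, rfl⟩
  have hκ : κ ∈ Kp p := by rw [hκdef]; exact Kp_mul hk' (Kp_inv hk)
  have hsd : s * dMat p j = dMat p j' * κ := by
    have h1 : t'⁻¹ * (t * dMat p j * k) * k⁻¹ = s * dMat p j := by
      rw [← mul_assoc t'⁻¹ (t * dMat p j) k, Matrix.mul_nonsing_inv_cancel_right _ _ hdk, hs,
        ← mul_assoc]
    have h2 : t'⁻¹ * (t' * dMat p j' * k') * k⁻¹ = dMat p j' * κ := by
      rw [← mul_assoc t'⁻¹ (t' * dMat p j') k', ← mul_assoc t'⁻¹ t' (dMat p j'),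
        Matrix.nonsing_inv_mul _ hdt', one_mul, hκdef, mul_assoc]
    rw [← h1, ← h2, heq]
  have hinv : t'⁻¹ * Δ = Δ * t'⁻¹ := by
    calc t'⁻¹ * Δ = t'⁻¹ * Δ * (t' * t'⁻¹) := by rw [Matrix.mul_nonsing_inv _ hdt', mul_one]
      _ = t'⁻¹ * (Δ * t') * t'⁻¹ := by rw [mul_assoc, mul_assoc, mul_assoc]
      _ = t'⁻¹ * (t' * Δ) * t'⁻¹ := by rw [← htc']
      _ = Δ * t'⁻¹ := by
          rw [← mul_assoc, Matrix.nonsing_inv_mul _ hdt', one_mul]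
  have hsc : s * Δ = Δ * s := by
    calc s * Δ = t'⁻¹ * (t * Δ) := by rw [hs, mul_assoc]
      _ = t'⁻¹ * Δ * t := by rw [htc, mul_assoc]
      _ = Δ * s := by rw [hinv, hs, mul_assoc]
  have e00 : s 0 0 = κ 0 0 := by
    have h := congrFun (congrFun hsd 0) 0
    simpa [dMat, Matrix.mul_apply, Fin.sum_univ_two] using h
  have e10 : s 1 0 = (p:ℚ_[p])^j' * κ 1 0 := by
    have h := congrFun (congrFun hsd 1) 0
    simpa [dMat, Matrix.mul_apply, Fin.sum_univ_two] using h
  have ce01 : s 0 1 = α * s 1 0 := by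
    have h := congrFun (congrFun hsc 0) 0
    simpa [hΔ, Matrix.mul_apply, Fin.sum_univ_two] using h
  have ce11 : s 0 0 * α + s 0 1 * β = α * s 1 1 := by
    have h := congrFun (congrFun hsc 0) 1
    simpa [hΔ, Matrix.mul_apply, Fin.sum_univ_two] using h
  have hs11 : s 1 1 = s 0 0 + β * s 1 0 := by
    apply mul_left_cancel₀ hα0
    rw [← ce11, ce01]; ring
  have n00 : ‖s 0 0‖ ≤ 1 := by rw [e00]; exact (hκ.2 0 0).1
  have n10 : ‖s 1 0‖ ≤ 1 := by
    rw [e10, norm_mul, Padic.norm_p_pow]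
    have h1 : (p:ℝ)^(-(j':ℤ)) ≤ 1 := zpow_le_one_of_nonpos₀ (le_of_lt pR1) (by omega)
    exact mul_le_one₀ h1 (norm_nonneg _) (hκ.2 1 0).1
  have ndet : ‖s.det‖ ≤ 1 := by
    rw [Matrix.det_fin_two, hs11, ce01]
    exact nsub (nmul n00 (nadd n00 (nmul hβ n10))) (nmul (nmul (le_of_eq hα) n10) n10)
  have hdd : ∀ m:ℕ, (dMat p m).det = (p:ℚ_[p])^m := by
    intro m; simp [dMat, Matrix.det_fin_two_of]
  have hdetEq : s.det * (p:ℚ_[p])^j = (p:ℚ_[p])^j' * κ.det := by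
    have h := congrArg Matrix.det hsd
    rw [Matrix.det_mul, Matrix.det_mul, hdd, hdd] at h
    exact h
  have hnormEq : ‖s.det‖ * (p:ℝ)^(-(j:ℤ)) = (p:ℝ)^(-(j':ℤ)) := by
    have h := congrArg norm hdetEq
    rw [norm_mul, norm_mul, Padic.norm_p_pow, Padic.norm_p_pow,
      Kp_det_norm_one hκ, mul_one] at h
    exact h
  have hle : (p:ℝ)^(-(j':ℤ)) ≤ (p:ℝ)^(-(j:ℤ)) := by
    rw [← hnormEq]
    have hpos : (0:ℝ) < (p:ℝ)^(-(j:ℤ)) := zpow_pos (lt_trans zero_lt_one pR1) _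
    nlinarith
  have := (zpow_le_zpow_iff_right₀ pR1).1 hle
  omega


end Stmt13Aux

open Stmt13Aux in

theorem stmt13 (p : ℕ) [Fact (Nat.Prime p)] (α β : ℚ_[p])
    (hα : ‖α‖ = 1) (hβ : ‖β‖ ≤ 1)
    (hroot : ∀ x : ℚ_[p], x^2 - β * x - α ≠ 0)
    (hbd : ∀ b d : ℚ_[p], ‖b‖ = 1 → ‖d‖ = 1 →
      (p : ℝ)⁻¹ ≤ ‖α * d^2 - b^2 - β * b * d‖)
    (g : Matrix (Fin 2) (Fin 2) ℚ_[p]) (hg : IsUnit g) :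
    ∃! j : ℕ, ∃ t k : Matrix (Fin 2) (Fin 2) ℚ_[p],
      (IsUnit t ∧ t * !![0, α; 1, β] = !![0, α; 1, β] * t) ∧
      k ∈ Kp p ∧ g = t * dMat p j * k := by
  have hdetg : g.det ≠ 0 := by
    have := (Matrix.isUnit_iff_isUnit_det g).1 hg
    exact isUnit_iff_ne_zero.1 this
  obtain ⟨k₁, k₁inv, hkk, hkk', hb1, hb2, h10⟩ :
      ∃ k₁ k₁inv : Matrix (Fin 2) (Fin 2) ℚ_[p], k₁ * k₁inv = 1 ∧ k₁inv * k₁ = 1 ∧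
        (∀ i l, ‖k₁ i l‖ ≤ 1) ∧ (∀ i l, ‖k₁inv i l‖ ≤ 1) ∧ (g * k₁) 1 0 = 0 := by
    by_cases hc : ‖g 1 0‖ ≤ ‖g 1 1‖
    · have hd0 : g 1 1 ≠ 0 := by
        intro h0
        rw [h0, norm_zero] at hc
        have hb0 : g 1 0 = 0 := norm_le_zero_iff.1 hc
        apply hdetg
        rw [Matrix.det_fin_two, hb0, h0]; ring
      have hq : ‖g 1 0 / g 1 1‖ ≤ 1 := by
        rw [norm_div]; exact div_le_one_of_le₀ hc (norm_nonneg _)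
      have hq' : ‖g 1 0‖ / ‖g 1 1‖ ≤ 1 := div_le_one_of_le₀ hc (norm_nonneg _)
      refine ⟨!![1,0; -(g 1 0/g 1 1),1], !![1,0; g 1 0/g 1 1,1], ?_, ?_, ?_, ?_, ?_⟩
      · ext i l
        fin_cases i <;> fin_cases l <;>
          simp [Matrix.mul_apply, Fin.sum_univ_two, Matrix.one_apply]
      · ext i l
        fin_cases i <;> fin_cases l <;>
          simp [Matrix.mul_apply, Fin.sum_univ_two, Matrix.one_apply]
      · intro i l
        fin_cases i <;> fin_cases l <;> simp [norm_neg, hq, hq']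
      · intro i l
        fin_cases i <;> fin_cases l <;> simp [hq, hq']
      · simp only [Matrix.mul_apply, Fin.sum_univ_two]
        simp
        field_simp
        ring
    · have hlt : ‖g 1 1‖ < ‖g 1 0‖ := not_le.1 hc
      have hb0 : g 1 0 ≠ 0 := by
        intro h0; rw [h0, norm_zero] at hlt
        exact absurd hlt (not_lt.2 (norm_nonneg _))
      have hq : ‖g 1 1 / g 1 0‖ ≤ 1 := by
        rw [norm_div]; exact div_le_one_of_le₀ hlt.le (norm_nonneg _)
      have hq' : ‖g 1 1‖ / ‖g 1 0‖ ≤ 1 := div_le_one_of_le₀ hlt.le (norm_nonneg _)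
      refine ⟨!![-(g 1 1/g 1 0), 1; 1, 0], !![0, 1; 1, g 1 1/g 1 0], ?_, ?_, ?_, ?_, ?_⟩
      · ext i l
        fin_cases i <;> fin_cases l <;>
          simp [Matrix.mul_apply, Fin.sum_univ_two, Matrix.one_apply]
      · ext i l
        fin_cases i <;> fin_cases l <;>
          simp [Matrix.mul_apply, Fin.sum_univ_two, Matrix.one_apply]
      · intro i l
        fin_cases i <;> fin_cases l <;> simp [norm_neg, hq, hq']
      · intro i l
        fin_cases i <;> fin_cases l <;> simp [hq, hq']
      · simp only [Matrix.mul_apply, Fin.sum_univ_two]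
        simp
        field_simp
        ring
  have hdk₁ : k₁.det ≠ 0 := by
    have : k₁.det * k₁inv.det = 1 := by rw [← Matrix.det_mul, hkk, Matrix.det_one]
    exact left_ne_zero_of_mul_eq_one this
  have hdeth : (g * k₁).det ≠ 0 := by
    rw [Matrix.det_mul]; exact mul_ne_zero hdetg hdk₁
  have hprod : (g * k₁) 0 0 * (g * k₁) 1 1 ≠ 0 := by
    intro h0
    apply hdeth
    rw [Matrix.det_fin_two, h10]; rw [mul_zero, sub_zero]; exact h0
  have ha' : (g * k₁) 0 0 ≠ 0 := fun h0 => hprod (by rw [h0, zero_mul])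
  have hd' : (g * k₁) 1 1 ≠ 0 := fun h0 => hprod (by rw [h0, mul_zero])
  obtain ⟨j, t, k, htt, hkK, hEq⟩ :=
    tri_exists α β hα hβ hroot hbd ((g * k₁) 0 0) ((g * k₁) 0 1) ((g * k₁) 1 1) ha' hd'
  have hhe : g * k₁ = !![(g * k₁) 0 0, (g * k₁) 0 1; 0, (g * k₁) 1 1] := by
    rw [← h10]
    exact Matrix.etaExpand_eq (g * k₁) ▸ (Matrix.eta_fin_two (g * k₁))
  have hk1invK : k₁inv ∈ Kp p := mem_Kp_of hkk' hkk hb2 hb1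
  have hgEq : g = t * dMat p j * (k * k₁inv) := by
    calc g = g * (k₁ * k₁inv) := by rw [hkk, mul_one]
      _ = (g * k₁) * k₁inv := by rw [mul_assoc]
      _ = (t * dMat p j * k) * k₁inv := by rw [hhe, hEq]
      _ = t * dMat p j * (k * k₁inv) := by rw [mul_assoc]
  refine ⟨j, ⟨t, k * k₁inv, htt, Kp_mul hkK hk1invK, hgEq⟩, ?_⟩
  rintro j' ⟨t', k', ⟨ht', htc'⟩, hk', hEq'⟩
  have e1 : t' * dMat p j' * k' = t * dMat p j * (k * k₁inv) := by rw [← hEq', hgEq]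
  exact le_antisymm
    (coset_le α β hα hβ ht' htc' htt.1 htt.2 hk' (Kp_mul hkK hk1invK) e1)
    (coset_le α β hα hβ htt.1 htt.2 ht' htc' (Kp_mul hkK hk1invK) hk' e1.symm)
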